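/- There is no map T : ℍ × ℍ → ℍ with all of the following properties: T is additive in each variable; T(c·α, β) = c·T(α, β) for all c, α, β ∈ ℍ (left ℍ-linearity in the first variable); T(α, β) = conj(T(β, α)) for all α, β ∈ ℍ (Hermitian symmetry); for every α ≠ 0, T(α, α) is a real number r > 0 (viewed inside ℍ, i.e. T(α,α) has zero imaginary part and positive real part); and T(conj(u)·α·v, conj(u)·β·v) = T(α, β) for all α, β ∈ ℍ and all unit quaternions u, v (invariance under the isotropy action of Sp(1) × Sp(1)). -/

import Mathlib

/-- there is no `ℍ`-valued left Hermitian positive definite form on `ℍ` that is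
invariant under the isotropy action `α ↦ conj(u)·α·v` of `Sp(1) × Sp(1)`. -/
theorem no_invariant_left_hermitian_form :
    ¬ ∃ T : Quaternion ℝ → Quaternion ℝ → Quaternion ℝ,
      (∀ α α' β : Quaternion ℝ, T (α + α') β = T α β + T α' β) ∧
      (∀ α β β' : Quaternion ℝ, T α (β + β') = T α β + T α β') ∧
      (∀ c α β : Quaternion ℝ, T (c * α) β = c * T α β) ∧
      (∀ α β : Quaternion ℝ, T α β = star (T β α)) ∧
      (∀ α : Quaternion ℝ, α ≠ 0 → (T α α).im = 0 ∧ 0 < (T α α).re) ∧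
      (∀ (α β u v : Quaternion ℝ), ‖u‖ = 1 → ‖v‖ = 1 →
        T (star u * α * v) (star u * β * v) = T α β) := by
  rintro ⟨T, hadd1, hadd2, hlin, hherm, hpos, hinv⟩
  set t : Quaternion ℝ := T 1 1 with ht
  obtain ⟨him, hre⟩ := hpos 1 one_ne_zero
  have htreal : t = ((t.re : ℝ) : Quaternion ℝ) := by
    conv_lhs => rw [← Quaternion.re_add_im t]
    rw [him]; simp
  have hstar_t : star t = t := by rw [htreal]; simp
  have ht0 : t ≠ 0 := by
    rw [htreal]
    intro h
    have h' : t.re = 0 := congrArg QuaternionAlgebra.re h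
    exact hre.ne' h'
  have hq1 : ∀ q : Quaternion ℝ, T q 1 = q * t := by
    intro q
    have := hlin q 1 1
    simpa using this
  have hT1 : ∀ x : Quaternion ℝ, T 1 x = t * star x := by
    intro x
    rw [hherm, hq1, star_mul, hstar_t]
  set u : Quaternion ℝ := ⟨0,1,0,0⟩ with hu
  set q : Quaternion ℝ := ⟨0,0,-1,0⟩ with hq
  have hnsq : Quaternion.normSq u = 1 := by
    rw [Quaternion.normSq_def']; norm_num
  have hnu : ‖u‖ = 1 := by
    have h := Quaternion.normSq_eq_norm_mul_self u
    rw [hnsq] at h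
    nlinarith [norm_nonneg u]
  have key := hinv q 1 u 1 hnu (norm_one)
  rw [mul_one, mul_one, mul_one] at key
  have h1 : T (star u * q) (star u) = star u * T q (star u) := hlin (star u) q (star u)
  have h2 : T (star u) q = star u * (t * star q) := by
    have := hlin (star u) 1 q
    rw [mul_one] at this
    rw [this, hT1]
  have h3 : T q (star u) = q * t * u := by
    rw [hherm, h2]
    simp [star_mul, hstar_t, mul_assoc]
  have h4 : star u * (q * t * u) = q * t := by
    rw [← h3, ← h1, key, hq1]
  have hcomm : ∀ x : Quaternion ℝ, t * x = x * t := by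
    intro x; rw [htreal]; exact (Quaternion.coe_commute _ _)
  have h5 : (star u * q * u) * t = q * t := by
    rw [← h4, mul_assoc q t u, hcomm u]
    simp [mul_assoc]
  have h6 : star u * q * u = q := mul_right_cancel₀ ht0 h5
  have hne : star u * q * u ≠ q := by
    norm_num [Quaternion.ext_iff, Quaternion.re_mul, Quaternion.imI_mul, Quaternion.imJ_mul,
      Quaternion.imK_mul, Quaternion.re_star, Quaternion.imI_star, Quaternion.imJ_star,
      Quaternion.imK_star]
  exact hne h6
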